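/- Let D ≥ 1, let S1, S2 be nonempty subsets of Ω = {0, 1, ..., D−1}, and let π_1, ..., π_k be k independent permutations of Ω, each chosen uniformly at random. Then the estimator R̂_M = (1/k) Σ_{j=1}^{k} 1{min(π_j(S1)) = min(π_j(S2))} satisfies E[R̂_M] = R, where R = |S1 ∩ S2| / |S1 ∪ S2| is the resemblance. -/

import Mathlib

open Finset


lemma my_min'_congr {α : Type*} [LinearOrder α] {s t : Finset α} (h : s = t)
    (hs : s.Nonempty) : s.min' hs = t.min' (h ▸ hs) := by subst h; rfl

lemma my_image_swap {α : Type*} [DecidableEq α] {U : Finset α} {a b : α}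
    (ha : a ∈ U) (hb : b ∈ U) : U.image (Equiv.swap a b) = U := by
  apply Finset.eq_of_subset_of_card_le
  · intro x hx
    simp only [mem_image] at hx
    obtain ⟨y, hy, rfl⟩ := hx
    rcases eq_or_ne y a with rfl | hya
    · simpa [Equiv.swap_apply_left]
    rcases eq_or_ne y b with rfl | hyb
    · simpa [Equiv.swap_apply_right]
    · rwa [Equiv.swap_apply_of_ne_of_ne hya hyb]
  · rw [Finset.card_image_of_injective _ (Equiv.injective _)]

-- argmin function
def mfun {D : ℕ} (S1 S2 : Finset (Fin D)) (h1 : S1.Nonempty) (π : Equiv.Perm (Fin D)) : Fin D :=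
  π.symm (((S1 ∪ S2).image π).min' ((h1.mono Finset.subset_union_left).image π))

lemma mfun_mem {D : ℕ} (S1 S2 : Finset (Fin D)) (h1 : S1.Nonempty) (π : Equiv.Perm (Fin D)) :
    mfun S1 S2 h1 π ∈ S1 ∪ S2 := by
  have hm := Finset.min'_mem ((S1 ∪ S2).image π) ((h1.mono Finset.subset_union_left).image π)
  simp only [mem_image] at hm
  obtain ⟨y, hy, hyeq⟩ := hm
  have : mfun S1 S2 h1 π = y := by
    unfold mfun
    rw [← hyeq]; simp
  rwa [this]

lemma cond_iff {D : ℕ} (S1 S2 : Finset (Fin D)) (h1 : S1.Nonempty) (h2 : S2.Nonempty)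
    (π : Equiv.Perm (Fin D)) :
    ((S1.image π).min' (h1.image π) = (S2.image π).min' (h2.image π)) ↔
    π.symm (((S1 ∪ S2).image π).min' ((h1.mono Finset.subset_union_left).image π)) ∈ S1 ∩ S2 := by
  set m1 := (S1.image π).min' (h1.image π) with hm1
  set m2 := (S2.image π).min' (h2.image π) with hm2
  set mU := ((S1 ∪ S2).image π).min' ((h1.mono Finset.subset_union_left).image π) with hmU
  have hUim : (S1 ∪ S2).image ⇑π = S1.image π ∪ S2.image π := Finset.image_union _ _
  have hmUmem : mU ∈ S1.image π ∪ S2.image π := by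
    rw [← hUim]; exact Finset.min'_mem _ _
  have hmUle1 : mU ≤ m1 := by
    apply Finset.min'_le
    rw [hUim]
    exact Finset.mem_union_left _ (Finset.min'_mem _ _)
  have hmUle2 : mU ≤ m2 := by
    apply Finset.min'_le
    rw [hUim]
    exact Finset.mem_union_right _ (Finset.min'_mem _ _)
  constructor
  · intro h
    have hmem1 : m1 ∈ S1.image π := Finset.min'_mem _ _
    have hmem2 : m2 ∈ S2.image π := Finset.min'_mem _ _
    have heq : m1 = mU := by
      rcases Finset.mem_union.1 hmUmem with hc | hc
      · exact le_antisymm (Finset.min'_le _ _ hc) hmUle1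
      · have : m2 ≤ mU := Finset.min'_le _ _ hc
        exact le_antisymm (h ▸ this) hmUle1
    rw [Finset.mem_inter]
    constructor
    · obtain ⟨y, hy, hyeq⟩ := Finset.mem_image.1 hmem1
      have : π.symm mU = y := by rw [← heq, ← hyeq]; simp
      rwa [this]
    · obtain ⟨y, hy, hyeq⟩ := Finset.mem_image.1 hmem2
      have : π.symm mU = y := by rw [← heq, h, ← hyeq]; simp
      rwa [this]
  · intro h
    obtain ⟨hin1, hin2⟩ := Finset.mem_inter.1 h
    have hmU1 : mU ∈ S1.image π := by
      refine Finset.mem_image.2 ⟨π.symm mU, hin1, by simp⟩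
    have hmU2 : mU ∈ S2.image π := by
      refine Finset.mem_image.2 ⟨π.symm mU, hin2, by simp⟩
    have e1 : m1 = mU := le_antisymm (Finset.min'_le _ _ hmU1) hmUle1
    have e2 : m2 = mU := le_antisymm (Finset.min'_le _ _ hmU2) hmUle2
    rw [e1, e2]

lemma mfun_mul_swap {D : ℕ} (S1 S2 : Finset (Fin D)) (h1 : S1.Nonempty)
    {a b : Fin D} (ha : a ∈ S1 ∪ S2) (hb : b ∈ S1 ∪ S2) (π : Equiv.Perm (Fin D)) :
    mfun S1 S2 h1 (π * Equiv.swap a b) = Equiv.swap a b (mfun S1 S2 h1 π) := by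
  unfold mfun
  have himg : (S1 ∪ S2).image ⇑(π * Equiv.swap a b) = (S1 ∪ S2).image ⇑π := by
    have : ⇑(π * Equiv.swap a b) = ⇑π ∘ ⇑(Equiv.swap a b) := rfl
    rw [this, ← Finset.image_image, my_image_swap ha hb]
  have hmin : ((S1 ∪ S2).image ⇑(π * Equiv.swap a b)).min'
      ((h1.mono Finset.subset_union_left).image _)
      = ((S1 ∪ S2).image ⇑π).min' ((h1.mono Finset.subset_union_left).image _) := by
    exact my_min'_congr himg _
  rw [hmin]
  rw [← Equiv.Perm.inv_def, mul_inv_rev, Equiv.swap_inv]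
  rfl

lemma fiber_eq {D : ℕ} (S1 S2 : Finset (Fin D)) (h1 : S1.Nonempty)
    {a b : Fin D} (ha : a ∈ S1 ∪ S2) (hb : b ∈ S1 ∪ S2) :
    (univ.filter (fun π : Equiv.Perm (Fin D) => mfun S1 S2 h1 π = a)).card =
    (univ.filter (fun π : Equiv.Perm (Fin D) => mfun S1 S2 h1 π = b)).card := by
  apply Finset.card_bij' (fun π _ => π * Equiv.swap a b) (fun π _ => π * Equiv.swap a b)
  · intro π hπ
    simp only [mem_filter, mem_univ, true_and] at hπ ⊢
    rw [mfun_mul_swap S1 S2 h1 ha hb, hπ, Equiv.swap_apply_left]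
  · intro π hπ
    simp only [mem_filter, mem_univ, true_and] at hπ ⊢
    rw [mfun_mul_swap S1 S2 h1 ha hb, hπ, Equiv.swap_apply_right]
  · intro π _; simp [mul_assoc]
  · intro π _; simp [mul_assoc]

lemma nat_count {D : ℕ} (S1 S2 : Finset (Fin D)) (h1 : S1.Nonempty) :
    (univ.filter (fun π : Equiv.Perm (Fin D) => mfun S1 S2 h1 π ∈ S1 ∩ S2)).card
      * (S1 ∪ S2).card
    = (S1 ∩ S2).card * Fintype.card (Equiv.Perm (Fin D)) := by
  obtain ⟨a₀, ha₀⟩ := id h1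
  have ha₀U : a₀ ∈ S1 ∪ S2 := Finset.mem_union_left _ ha₀
  set v := (univ.filter (fun π : Equiv.Perm (Fin D) => mfun S1 S2 h1 π = a₀)).card with hv
  -- total count
  have htot : Fintype.card (Equiv.Perm (Fin D)) = (S1 ∪ S2).card * v := by
    rw [← Finset.card_univ]
    rw [Finset.card_eq_sum_card_fiberwise (f := mfun S1 S2 h1) (t := S1 ∪ S2)
      (fun π _ => mfun_mem S1 S2 h1 π)]
    rw [Finset.sum_congr rfl (fun a haU => fiber_eq S1 S2 h1 haU ha₀U)]
    simp [mul_comm, ← hv]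
  -- filtered count
  have hfilt : (univ.filter (fun π : Equiv.Perm (Fin D) => mfun S1 S2 h1 π ∈ S1 ∩ S2)).card
      = (S1 ∩ S2).card * v := by
    rw [Finset.card_eq_sum_card_fiberwise (f := mfun S1 S2 h1) (t := S1 ∩ S2)
      (s := univ.filter (fun π : Equiv.Perm (Fin D) => mfun S1 S2 h1 π ∈ S1 ∩ S2))
      (fun π hπ => (Finset.mem_filter.1 hπ).2)]
    have : ∀ a ∈ S1 ∩ S2,
        ((univ.filter (fun π : Equiv.Perm (Fin D) => mfun S1 S2 h1 π ∈ S1 ∩ S2)).filter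
          (fun π => mfun S1 S2 h1 π = a)).card = v := by
      intro a haT
      have haU : a ∈ S1 ∪ S2 := Finset.mem_union_left _ (Finset.mem_inter.1 haT).1
      rw [Finset.filter_filter]
      have : (univ.filter (fun π : Equiv.Perm (Fin D) =>
          mfun S1 S2 h1 π ∈ S1 ∩ S2 ∧ mfun S1 S2 h1 π = a)) =
          (univ.filter (fun π : Equiv.Perm (Fin D) => mfun S1 S2 h1 π = a)) := by
        apply Finset.filter_congr
        intro π _
        constructor
        · exact fun h => h.2
        · exact fun h => ⟨h ▸ haT, h⟩
      rw [this]
      exact fiber_eq S1 S2 h1 haU ha₀U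
    rw [Finset.sum_congr rfl this]
    simp [mul_comm]
  rw [hfilt, htot]; ring

lemma single_sum {D : ℕ} (S1 S2 : Finset (Fin D)) (h1 : S1.Nonempty) (h2 : S2.Nonempty) :
    (∑ π : Equiv.Perm (Fin D),
      (if (S1.image π).min' (h1.image π) = (S2.image π).min' (h2.image π)
        then (1:ℝ) else 0)) * ((S1 ∪ S2).card : ℝ)
    = ((S1 ∩ S2).card : ℝ) * (Fintype.card (Equiv.Perm (Fin D)) : ℝ) := by
  classical
  have hcond : ∀ π : Equiv.Perm (Fin D),
      (if (S1.image π).min' (h1.image π) = (S2.image π).min' (h2.image π)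
        then (1:ℝ) else 0)
      = (if mfun S1 S2 h1 π ∈ S1 ∩ S2 then (1:ℝ) else 0) := by
    intro π
    simp only [cond_iff S1 S2 h1 h2 π]
    rfl
  rw [Finset.sum_congr rfl (fun π _ => hcond π)]
  have : (∑ π : Equiv.Perm (Fin D), (if mfun S1 S2 h1 π ∈ S1 ∩ S2 then (1:ℝ) else 0))
      = ((univ.filter (fun π : Equiv.Perm (Fin D) => mfun S1 S2 h1 π ∈ S1 ∩ S2)).card : ℝ) := by
    simp
  rw [this]
  have := nat_count S1 S2 h1
  exact_mod_cast congrArg (Nat.cast : ℕ → ℝ) this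
lemma sum_eval {G : Type*} [Fintype G] {k : ℕ} (j : Fin k) (f : G → ℝ) :
    ∑ π : Fin k → G, f (π j) = ((Fintype.card G : ℝ) ^ (k - 1)) * ∑ g : G, f g := by
  classical
  rw [← Equiv.sum_comp (Equiv.funSplitAt j G).symm (fun π : Fin k → G => f (π j))]
  have : ∀ p : G × ({ i // i ≠ j } → G), f (((Equiv.funSplitAt j G).symm p) j) = f p.1 := by
    intro p; simp
  rw [Finset.sum_congr rfl (fun p _ => this p)]
  rw [Fintype.sum_prod_type]
  simp only [Finset.sum_const, Finset.card_univ, nsmul_eq_mul]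
  have hcard : Fintype.card ({ i : Fin k // i ≠ j } → G) = Fintype.card G ^ (k - 1) := by
    rw [Fintype.card_fun]
    congr 1
    rw [Fintype.card_subtype_compl (p := fun i => i = j)]
    simp [Fintype.card_subtype_eq]
  rw [← Finset.mul_sum, hcard]
  push_cast
  ring

/-- For `D ≥ 1`, nonempty `S1, S2 ⊆ {0, …, D−1}`, and `k` independent uniformly
random permutations `π_1, …, π_k` (modeled as a uniformly random element of the product space of
`k`-tuples of permutations), the estimator
`R̂_M = (1/k) Σ_{j=1}^k 1{min(π_j(S1)) = min(π_j(S2))}` has expectation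
`E[R̂_M] = R = |S1 ∩ S2| / |S1 ∪ S2|`. -/
theorem stmt1 (D k : ℕ) (hD : 1 ≤ D) (hk : 1 ≤ k) (S1 S2 : Finset (Fin D))
    (h1 : S1.Nonempty) (h2 : S2.Nonempty) :
    (∑ π : Fin k → Equiv.Perm (Fin D),
        (1 / (k : ℝ)) * ∑ j : Fin k,
          (if (S1.image (π j)).min' (h1.image (π j)) = (S2.image (π j)).min' (h2.image (π j))
            then (1 : ℝ) else 0))
      / (Fintype.card (Fin k → Equiv.Perm (Fin D)) : ℝ)
    = ((S1 ∩ S2).card : ℝ) / ((S1 ∪ S2).card : ℝ) := by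
  classical
  set c : ℕ := Fintype.card (Equiv.Perm (Fin D)) with hc
  set g : Equiv.Perm (Fin D) → ℝ := fun σ =>
    (if (S1.image σ).min' (h1.image σ) = (S2.image σ).min' (h2.image σ)
      then (1 : ℝ) else 0) with hg
  set N : ℝ := ∑ σ : Equiv.Perm (Fin D), g σ with hN
  have hnum : (∑ π : Fin k → Equiv.Perm (Fin D),
        (1 / (k : ℝ)) * ∑ j : Fin k, g (π j))
      = ((c : ℝ) ^ (k - 1)) * N := by
    rw [← Finset.mul_sum, Finset.sum_comm]
    have : ∀ j : Fin k, (∑ π : Fin k → Equiv.Perm (Fin D), g (π j))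
        = ((c : ℝ) ^ (k - 1)) * N := fun j => sum_eval j g
    rw [Finset.sum_congr rfl (fun j _ => this j)]
    rw [Finset.sum_const, Finset.card_univ, Fintype.card_fin, nsmul_eq_mul]
    have hk0 : (k : ℝ) ≠ 0 := by positivity
    field_simp
  have hden : (Fintype.card (Fin k → Equiv.Perm (Fin D)) : ℝ) = (c : ℝ) ^ k := by
    rw [Fintype.card_fun, Fintype.card_fin]; push_cast; ring
  rw [hnum, hden]
  have hc0 : (c : ℝ) ≠ 0 := by
    have : 0 < c := Fintype.card_pos
    positivity
  have hU0 : (((S1 ∪ S2).card : ℕ) : ℝ) ≠ 0 := by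
    have : 0 < (S1 ∪ S2).card := Finset.card_pos.2 (h1.mono Finset.subset_union_left)
    positivity
  have hck : (c : ℝ) ^ k = (c : ℝ) ^ (k - 1) * (c : ℝ) := by
    conv_lhs => rw [← Nat.succ_pred_eq_of_pos hk]
    rw [pow_succ]
    rfl
  rw [div_eq_div_iff (by positivity) hU0]
  have hkey : N * ((S1 ∪ S2).card : ℝ) = ((S1 ∩ S2).card : ℝ) * (c : ℝ) :=
    single_sum S1 S2 h1 h2
  rw [hck]
  linear_combination ((c : ℝ) ^ (k - 1)) * hkey
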